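/- For every n ≥ 2 and every subset A ⊆ {1, …, n−1}, the vector v_A is a lecture hall partition and satisfies (v_A)_n − (v_A)_{n−1} = 1. -/

import Mathlib

/-- A lecture hall partition of length `n`: a vector `λ ∈ ℤⁿ` (indexed `0,…,n-1`,
corresponding to `λ_1,…,λ_n`) with `0 ≤ λ_1` and `i·λ_{i+1} ≥ (i+1)·λ_i` for `1 ≤ i ≤ n-1`. -/
def IsLectureHall (n : ℕ) (l : Fin n → ℤ) : Prop :=
  (∀ h : 0 < n, 0 ≤ l ⟨0, h⟩) ∧
  ∀ i : ℕ, ∀ h : i + 1 < n,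
    ((i : ℤ) + 1) * l ⟨i + 1, h⟩ ≥ ((i : ℤ) + 2) * l ⟨i, by omega⟩

/-- For a subset `A = {i_1 < i_2 < ⋯ < i_k} ⊆ {1,…,n-1}`, the vector
`v_A = (0,…,0, i_1, i_2, …, i_k, i_k + 1) ∈ ℤⁿ`: `n - k - 1` leading zeros, then the
elements of `A` in increasing order, and finally `max(A) + 1` (with `v_∅ = (0,…,0,1)`). -/
def vA (n : ℕ) (A : Finset ℕ) : Fin n → ℤ := fun j =>
  if (j : ℕ) = n - 1 then ((A.sort (· ≤ ·)).getLastD 0 : ℤ) + 1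
  else if n - 1 - A.card ≤ (j : ℕ) then
    (((A.sort (· ≤ ·)).getD ((j : ℕ) - (n - 1 - A.card)) 0 : ℕ) : ℤ)
  else 0

private lemma getLastD_eq_getD {l : List ℕ} (h : l ≠ []) (d : ℕ) :
    l.getLastD d = l.getD (l.length - 1) d := by
  have hp : 0 < l.length := List.length_pos_iff.mpr h
  rw [List.getLastD_eq_getLast?, List.getLast?_eq_getLast h, Option.getD_some,
    List.getD_eq_getElem l d (by omega : l.length - 1 < l.length), List.getLast_eq_getElem]

/-- For every `n ≥ 2` and every `A ⊆ {1,…,n-1}`, the vector `v_A` is a lecture hall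
partition with `(v_A)_n - (v_A)_{n-1} = 1`. -/
theorem vA_isLectureHall_degree_one (n : ℕ) (hn : 2 ≤ n) (A : Finset ℕ)
    (hA : A ⊆ Finset.Icc 1 (n - 1)) :
    IsLectureHall n (vA n A) ∧
      vA n A ⟨n - 1, by omega⟩ - vA n A ⟨n - 2, by omega⟩ = 1 := by
  set L := A.sort (· ≤ ·) with hL
  set k := A.card with hk
  have hlen : L.length = k := Finset.length_sort _
  have hkn : k ≤ n - 1 := by
    have := Finset.card_le_card hA
    rwa [Nat.card_Icc, Nat.add_sub_cancel] at this
  have hv : ∀ (j : ℕ) (hj : j < n), vA n A ⟨j, hj⟩ =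
      if j = n - 1 then ((L.getLastD 0 : ℕ) : ℤ) + 1
      else if n - 1 - k ≤ j then ((L.getD (j - (n - 1 - k)) 0 : ℕ) : ℤ)
      else 0 := fun j hj => rfl
  have hmem : ∀ m, m < k → 1 ≤ L.getD m 0 ∧ L.getD m 0 ≤ n - 1 := by
    intro m hm
    have h1 : m < L.length := by omega
    rw [List.getD_eq_getElem L 0 h1]
    have h2 : L[m] ∈ A := by
      rw [← Finset.mem_sort (α := ℕ) (· ≤ ·), ← hL]
      exact List.getElem_mem h1
    have := hA h2
    rw [Finset.mem_Icc] at this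
    exact this
  have hadj : ∀ m, m + 1 < k → L.getD m 0 + 1 ≤ L.getD (m + 1) 0 := by
    intro m hm
    have h1 : m < L.length := by omega
    have h2 : m + 1 < L.length := by omega
    rw [List.getD_eq_getElem L 0 h1, List.getD_eq_getElem L 0 h2]
    have hs : List.Pairwise (· < ·) L := (Finset.sortedLT_sort A).pairwise
    exact List.pairwise_iff_getElem.mp hs m (m + 1) h1 h2 (by omega)
  have hgap : ∀ m d, m + d < k → L.getD m 0 + d ≤ L.getD (m + d) 0 := by
    intro m d
    induction d with
    | zero => intro _; simp
    | succ d ih =>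
      intro hd
      show L.getD m 0 + (d + 1) ≤ L.getD (m + d + 1) 0
      have h1 := hadj (m + d) (by omega)
      have h2 := ih (by omega)
      omega
  have hbound : ∀ m, m < k → L.getD m 0 + (k - 1 - m) ≤ n - 1 := by
    intro m hm
    have hg := hgap m (k - 1 - m) (by omega)
    have he : m + (k - 1 - m) = k - 1 := by omega
    rw [he] at hg
    have := (hmem (k - 1) (by omega)).2
    omega
  refine ⟨⟨?_, ?_⟩, ?_⟩
  · intro h
    rw [hv 0 h]
    split_ifs <;> positivity
  · intro i h
    rw [hv (i + 1) h, hv i (by omega)]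
    by_cases h1 : i + 1 = n - 1
    · rw [if_pos h1, if_neg (show ¬i = n - 1 by omega)]
      by_cases hk0 : k = 0
      · rw [if_neg (show ¬n - 1 - k ≤ i by omega)]
        have hnil : L = [] := List.eq_nil_of_length_eq_zero (by omega)
        rw [hnil, List.getLastD_nil]
        have : (0 : ℤ) ≤ (i : ℤ) := Int.natCast_nonneg i
        push_cast
        nlinarith
      · rw [if_pos (show n - 1 - k ≤ i by omega)]
        have hi : i - (n - 1 - k) = k - 1 := by omega
        have hne : L ≠ [] := by
          intro hc; rw [hc] at hlen; simp at hlen; omega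
        rw [hi, getLastD_eq_getD hne, hlen]
        have hb := (hmem (k - 1) (by omega)).2
        have hb' : (L.getD (k - 1) 0 : ℤ) ≤ (n : ℤ) - 1 := by omega
        have hieq : (i : ℤ) = (n : ℤ) - 2 := by omega
        nlinarith
    · by_cases h2 : n - 1 - k ≤ i
      · rw [if_neg h1, if_pos (show n - 1 - k ≤ i + 1 by omega),
          if_neg (show ¬i = n - 1 by omega), if_pos h2]
        have hm1 : i + 1 - (n - 1 - k) = (i - (n - 1 - k)) + 1 := by omega
        rw [hm1]
        set m := i - (n - 1 - k) with hm
        have hmlt : m + 1 < k := by omega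
        have hg := hadj m hmlt
        have hbd := hbound m (by omega)
        have c1 : (L.getD m 0 : ℤ) + 1 ≤ (L.getD (m + 1) 0 : ℤ) := by omega
        have c2 : (L.getD m 0 : ℤ) ≤ (i : ℤ) + 1 := by omega
        have c3 : (0 : ℤ) ≤ (L.getD m 0 : ℤ) := Int.natCast_nonneg _
        have c4 : (0 : ℤ) ≤ (i : ℤ) := Int.natCast_nonneg i
        nlinarith
      · by_cases h3 : n - 1 - k ≤ i + 1
        · rw [if_neg h1, if_pos h3, if_neg (show ¬i = n - 1 by omega), if_neg h2]
          have c4 : (0 : ℤ) ≤ (i : ℤ) := Int.natCast_nonneg i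
          have c3 : (0 : ℤ) ≤ (L.getD (i + 1 - (n - 1 - k)) 0 : ℤ) := Int.natCast_nonneg _
          nlinarith
        · rw [if_neg h1, if_neg h3, if_neg (show ¬i = n - 1 by omega), if_neg h2]
          simp
  · rw [hv (n - 1) (by omega), hv (n - 2) (by omega), if_pos rfl, if_neg (by omega)]
    by_cases hk0 : k = 0
    · rw [if_neg (by omega)]
      have hnil : L = [] := List.eq_nil_of_length_eq_zero (by omega)
      rw [hnil, List.getLastD_nil]
      norm_num
    · rw [if_pos (by omega)]
      have hi : n - 2 - (n - 1 - k) = k - 1 := by omega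
      have hne : L ≠ [] := by
        intro hc; rw [hc] at hlen; simp at hlen; omega
      rw [hi, getLastD_eq_getD hne, hlen]
      ring
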